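/- Let τ' > 0 and u* ∈ ∂C(0). Then the number of points of the grid D = {τ Σ_{i∈I} k_i ψ_i : (k_i) ∈ ℤ^N} lying in SSAT(ū*, (0, τ']) is at most the number of points of the form τ Σ_{j∈J(u*)} k_j ψ_j, (k_j)_{j∈J(u*)} ∈ ℤ^{J(u*)}, lying in p(SSAT(ū*, (0, τ'])), where p is the projection Σ_{i∈I} α_i ψ_i ↦ Σ_{j∈J(u*)} α_j ψ_j onto Span(ψ_j : j ∈ J(u*)). -/

import Mathlib

open MeasureTheory Filter Set
open scoped Classical

noncomputable section

/-- The ambient space `ℝ^N` with the Euclidean structure. -/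
abbrev Euc (N : ℕ) := EuclideanSpace ℝ (Fin N)

variable {N : ℕ}

/-- The cell `C((k_i))` : points whose coordinates in the basis `ψ` satisfy
`τ(k_i - 1/2) ≤ u_i ≤ τ(k_i + 1/2)`. -/
def cube (ψ : Module.Basis (Fin N) ℝ (Euc N)) (τ : ℝ) (k : Fin N → ℤ) : Set (Euc N) :=
  {u | ∀ i, τ * ((k i : ℝ) - 1/2) ≤ ψ.repr u i ∧ ψ.repr u i ≤ τ * ((k i : ℝ) + 1/2)}

/-- The central cell `C(0)`. -/
def cube0 (ψ : Module.Basis (Fin N) ℝ (Euc N)) (τ : ℝ) : Set (Euc N) := cube ψ τ 0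

/-- The set of active (saturated) coordinates `J(u)` for `u ∈ C(0)`. -/
def Jset (ψ : Module.Basis (Fin N) ℝ (Euc N)) (τ : ℝ) (u : Euc N) : Set (Fin N) :=
  {i | ψ.repr u i = τ / 2 ∨ ψ.repr u i = -(τ / 2)}

/-- `sol` is the solution map of the problems `(P)(u)` : `sol u` minimizes `f(v - u)` over
`C(0)`.  (Under the hypotheses on `f` the minimizer is unique.) -/
def IsSol (ψ : Module.Basis (Fin N) ℝ (Euc N)) (τ : ℝ) (f : Euc N → ℝ) (sol : Euc N → Euc N) : Prop :=
  ∀ u, sol u ∈ cube0 ψ τ ∧ IsMinOn (fun v => f (v - u)) (cube0 ψ τ) (sol u)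

/-- `SSAT(C, A)` : the set of data `u` whose solution `sol u` lies in `C` and with
`f_d(u - sol u) ∈ A`. -/
def SSAT (sol : Euc N → Euc N) (fd : Euc N → ℝ) (C : Set (Euc N)) (A : Set ℝ) : Set (Euc N) :=
  {u | sol u ∈ C ∧ fd (u - sol u) ∈ A}

/-- `f` is a norm. -/
structure IsNormLike (f : Euc N → ℝ) : Prop where
  add_le : ∀ x y, f (x + y) ≤ f x + f y
  smul_eq : ∀ (c : ℝ) (x), f (c • x) = |c| * f x
  eq_zero_iff : ∀ x, f x = 0 ↔ x = 0

/-- `f` is a norm, continuously differentiable away from `0`, with strictly convex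
level sets. -/
structure GoodNorm (f : Euc N → ℝ) : Prop where
  add_le : ∀ x y, f (x + y) ≤ f x + f y
  smul_eq : ∀ (c : ℝ) (x), f (c • x) = |c| * f x
  eq_zero_iff : ∀ x, f x = 0 ↔ x = 0
  smooth : ∀ x : Euc N, x ≠ 0 → ContDiffAt ℝ 1 f x
  sconv : StrictConvex ℝ {x : Euc N | f x ≤ 1}

/-- `f` is curved : the normalized-gradient map `h : {f = 1} → S^{N-1}`,
`h(u) = ∇f(u)/‖∇f(u)‖₂`, is a bijection whose inverse is Lipschitz. -/
def Curved (f : Euc N → ℝ) : Prop :=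
  ∃ (L : NNReal) (g : Euc N → Euc N),
    LipschitzOnWith L g (Metric.sphere (0 : Euc N) 1) ∧
    (∀ u : Euc N, f u = 1 → g (‖gradient f u‖⁻¹ • gradient f u) = u) ∧
    ∀ w ∈ Metric.sphere (0 : Euc N) 1, ∃ u, f u = 1 ∧ ‖gradient f u‖⁻¹ • gradient f u = w

/-- The projection `p` onto `Span(ψ_j : j ∈ J)` along the other basis vectors. -/
def pJ (ψ : Module.Basis (Fin N) ℝ (Euc N)) (J : Set (Fin N)) (x : Euc N) : Euc N :=
  ∑ j : Fin N, if j ∈ J then ψ.repr x j • ψ j else 0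

/-- The "center" `u^c` of the face of `u` : keep the saturated coordinates, zero out
the others. -/
def ucOf (ψ : Module.Basis (Fin N) ℝ (Euc N)) (τ : ℝ) (u : Euc N) : Euc N :=
  pJ ψ (Jset ψ τ u) u

/-- The equivalence class `ū` of `u` in `C(0)` : same active set. -/
def ubar (ψ : Module.Basis (Fin N) ℝ (Euc N)) (τ : ℝ) (u : Euc N) : Set (Euc N) :=
  {w ∈ cube0 ψ τ | Jset ψ τ w = Jset ψ τ u}

/-- The discrete grid `D = τ ℤ^N` (in the basis `ψ`). -/
def Dgrid (ψ : Module.Basis (Fin N) ℝ (Euc N)) (τ : ℝ) : Set (Euc N) :=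
  {x | ∃ k : Fin N → ℤ, x = ∑ i, (τ * (k i : ℝ)) • ψ i}

/-- The slice `Dom((k_j)_{j∈J})` of the grid : grid points whose `J`-coordinates are
the prescribed `τ k_j`. -/
def DomSlice (ψ : Module.Basis (Fin N) ℝ (Euc N)) (τ : ℝ) (J : Set (Fin N)) (k : Fin N → ℤ) :
    Set (Euc N) :=
  {x ∈ Dgrid ψ τ | ∀ j ∈ J, ψ.repr x j = τ * (k j : ℝ)}

/-- The grid `τ ℤ^J` inside `Span(ψ_j : j ∈ J)`. -/
def JgridJ (ψ : Module.Basis (Fin N) ℝ (Euc N)) (τ : ℝ) (J : Set (Fin N)) : Set (Euc N) :=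
  {x | ∃ k : Fin N → ℤ, x = ∑ j : Fin N, if j ∈ J then (τ * (k j : ℝ)) • ψ j else 0}

/-- `Leb_K(S)` : the Lebesgue measure (in `ℝ^{#J}`) of the set of `J`-indexed coordinate
families whose combination lies in `S`. -/
def lebJ (ψ : Module.Basis (Fin N) ℝ (Euc N)) (J : Set (Fin N)) (S : Set (Euc N)) : ENNReal :=
  volume {a : ↥J → ℝ | (∑ j : ↥J, a j • ψ (j : Fin N)) ∈ S}

/-- The set `C_K` of centers of the faces of codimension `K`. -/
def CKset (ψ : Module.Basis (Fin N) ℝ (Euc N)) (τ : ℝ) (K : ℕ) : Set (Euc N) :=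
  {x | ∃ (J : Set (Fin N)) (ε : Fin N → ℝ), J.ncard = K ∧ (∀ j ∈ J, ε j = 1 ∨ ε j = -1) ∧
    x = ∑ j : Fin N, if j ∈ J then (ε j * (τ / 2)) • ψ j else 0}

/-- The set `Cl_K` of boundary points of `C(0)` with exactly `K` active constraints. -/
def ClKset (ψ : Module.Basis (Fin N) ℝ (Euc N)) (τ : ℝ) (K : ℕ) : Set (Euc N) :=
  {u | u ∈ frontier (cube0 ψ τ) ∧ (Jset ψ τ u).ncard = K}

/-- `k_i(u)` : the unique integer with `τ(k_i - 1/2) ≤ u_i < τ(k_i + 1/2)`. -/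
def kfun (ψ : Module.Basis (Fin N) ℝ (Euc N)) (τ : ℝ) (u : Euc N) (i : Fin N) : ℤ :=
  ⌊ψ.repr u i / τ + 1 / 2⌋

/-- The grid point `τ Σ k_i(u) ψ_i` approximating `u`. -/
def gridpt (ψ : Module.Basis (Fin N) ℝ (Euc N)) (τ : ℝ) (u : Euc N) : Euc N :=
  ∑ i, (τ * (kfun ψ τ u i : ℝ)) • ψ i

/-- `J̃(u)` : the active set of the solution of `(P)` at the grid point of `u`. -/
def Jtil (ψ : Module.Basis (Fin N) ℝ (Euc N)) (τ : ℝ) (sol : Euc N → Euc N) (u : Euc N) :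
    Set (Fin N) :=
  Jset ψ τ (sol (gridpt ψ τ u))

variable {N : ℕ}

namespace GoodNorm
variable {N : ℕ} {f : Euc N → ℝ}

lemma zero' (hf : GoodNorm f) : f 0 = 0 := (hf.eq_zero_iff 0).mpr rfl

lemma nonneg (hf : GoodNorm f) (x : Euc N) : 0 ≤ f x := by
  have h := hf.add_le x (-x)
  have h2 : f (-x) = f x := by simpa using hf.smul_eq (-1) x
  have h0 : (0 : Euc N) = x + (-x) := by abel
  rw [← h0, hf.zero'] at h; linarith

lemma pos (hf : GoodNorm f) {x : Euc N} (hx : x ≠ 0) : 0 < f x :=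
  (hf.nonneg x).lt_of_ne fun h => hx ((hf.eq_zero_iff x).mp h.symm)

lemma diffAt (hf : GoodNorm f) {x : Euc N} (hx : x ≠ 0) : DifferentiableAt ℝ f x :=
  (hf.smooth x hx).differentiableAt one_ne_zero

lemma convexOn (hf : GoodNorm f) : ConvexOn ℝ (univ : Set (Euc N)) f := by
  refine ⟨convex_univ, fun x _ y _ a b ha hb _ => ?_⟩
  calc f (a • x + b • y) ≤ f (a • x) + f (b • y) := hf.add_le _ _
    _ = a * f x + b * f y := by
        rw [hf.smul_eq, hf.smul_eq, abs_of_nonneg ha, abs_of_nonneg hb]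
    _ = a • f x + b • f y := by simp [smul_eq_mul]

lemma lineHasDerivAt {x : Euc N} (hd : DifferentiableAt ℝ f x) (d : Euc N) :
    HasDerivAt (fun t : ℝ => f (x + t • d)) (fderiv ℝ f x d) 0 := by
  have h1 : HasDerivAt (fun t : ℝ => x + t • d) d 0 := by
    simpa using ((hasDerivAt_id (0 : ℝ)).smul_const d).const_add x
  have h2 : HasFDerivAt f (fderiv ℝ f x) ((fun t : ℝ => x + t • d) 0) := by
    simpa using hd.hasFDerivAt
  exact h2.comp_hasDerivAt 0 h1

lemma subgrad (hf : GoodNorm f) {x : Euc N} (hx : x ≠ 0) (y : Euc N) :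
    f x + fderiv ℝ f x (y - x) ≤ f y := by
  have gconv : ConvexOn ℝ (univ : Set ℝ) (fun t : ℝ => f (x + t • (y - x))) := by
    refine ⟨convex_univ, fun s _ t _ a b ha hb hab => ?_⟩
    have h1 : x + (a • s + b • t) • (y - x)
        = a • (x + s • (y - x)) + b • (x + t • (y - x)) := by
      have h2 : a • (x + s • (y - x)) + b • (x + t • (y - x))
          = (a + b) • x + (a * s + b * t) • (y - x) := by module
      rw [h2, hab, one_smul]; simp [smul_eq_mul]
    simp only [h1]
    exact hf.convexOn.2 (mem_univ _) (mem_univ _) ha hb hab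
  have hs := gconv.le_slope_of_hasDerivAt (mem_univ (0:ℝ)) (mem_univ 1) one_pos
    (lineHasDerivAt (hf.diffAt hx) (y - x))
  rw [slope_def_field] at hs
  simp only [one_smul, zero_smul, add_zero, add_sub_cancel, sub_zero, div_one] at hs
  linarith

lemma dirnonneg (hf : GoodNorm f) {x : Euc N} (hx : x ≠ 0) (d : Euc N) {ε : ℝ} (hε : 0 < ε)
    (hmin : ∀ t ∈ Set.Ioc (0:ℝ) ε, f x ≤ f (x + t • d)) : 0 ≤ fderiv ℝ f x d := by
  have ht : Tendsto (slope (fun t : ℝ => f (x + t • d)) 0) (nhdsWithin 0 (Set.Ioi 0))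
      (nhds (fderiv ℝ f x d)) :=
    (hasDerivAt_iff_tendsto_slope.mp (lineHasDerivAt (hf.diffAt hx) d)).mono_left
      (nhdsWithin_mono 0 (fun t ht => ne_of_gt ht))
  refine ge_of_tendsto ht ?_
  filter_upwards [Ioc_mem_nhdsGT_of_mem ⟨le_refl (0:ℝ), hε⟩] with t htm
  rw [slope_def_field, sub_zero]
  apply div_nonneg _ htm.1.le
  have h1 := hmin t htm
  simp only [zero_smul, add_zero]
  linarith

lemma fderiv_le (hf : GoodNorm f) {x : Euc N} (hx : x ≠ 0) (z : Euc N) :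
    fderiv ℝ f x z ≤ f z := by
  have h := hf.subgrad hx (x + z)
  rw [add_sub_cancel_left] at h
  linarith [hf.add_le x z]

lemma euler (hf : GoodNorm f) {x : Euc N} (hx : x ≠ 0) : fderiv ℝ f x x = f x := by
  have h := hf.subgrad hx 0
  rw [zero_sub, map_neg, hf.zero'] at h
  linarith [hf.fderiv_le hx x]

lemma lt_one_of_mem_interior (hf : GoodNorm f) {z : Euc N}
    (hz : z ∈ interior {w : Euc N | f w ≤ 1}) : f z < 1 := by
  rcases eq_or_ne z 0 with rfl | hz0
  · simpa [hf.zero'] using one_pos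
  · obtain ⟨ε, hε, hball⟩ := Metric.mem_nhds_iff.mp (mem_interior_iff_mem_nhds.mp hz)
    have hz' : 0 < ‖z‖ := norm_pos_iff.mpr hz0
    have hq : 0 < ε / (2 * ‖z‖) := by positivity
    set t : ℝ := 1 + ε / (2 * ‖z‖) with htdef
    have ht1 : 1 < t := lt_add_of_pos_right 1 hq
    have hmem : t • z ∈ Metric.ball z ε := by
      rw [Metric.mem_ball, dist_eq_norm]
      have h3 : t • z - z = (t - 1) • z := by rw [sub_smul, one_smul]
      rw [h3, norm_smul, Real.norm_eq_abs, abs_of_pos (by linarith)]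
      have h4 : (t - 1) * ‖z‖ = ε / 2 := by
        rw [htdef]; field_simp; ring
      rw [h4]; linarith
    have h4 : f (t • z) ≤ 1 := hball hmem
    rw [hf.smul_eq, abs_of_pos (by linarith : (0:ℝ) < t)] at h4
    have h5 : 0 < f z := hf.pos hz0
    nlinarith

lemma eq_of_touch (hf : GoodNorm f) {x x' : Euc N} (hx : x ≠ 0) (hfeq : f x' = f x)
    (hφ : fderiv ℝ f x x' = f x) : x' = x := by
  by_contra hne
  have hc : 0 < f x := hf.pos hx
  set c := f x with hcdef
  set a : Euc N := c⁻¹ • x with hadef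
  set b : Euc N := c⁻¹ • x' with hbdef
  have hfa : f a = 1 := by
    rw [hadef, hf.smul_eq, abs_of_pos (by positivity)]
    exact inv_mul_cancel₀ hc.ne'
  have hfb : f b = 1 := by
    rw [hbdef, hf.smul_eq, abs_of_pos (by positivity), hfeq]
    exact inv_mul_cancel₀ hc.ne'
  have hab : a ≠ b := fun h => hne (smul_right_injective (Euc N) (inv_ne_zero hc.ne') h.symm)
  have hmid := hf.sconv (le_of_eq hfa) (le_of_eq hfb) hab one_half_pos one_half_pos (by norm_num)
  have hlt : f ((1/2 : ℝ) • a + (1/2 : ℝ) • b) < 1 := hf.lt_one_of_mem_interior hmid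
  have heq : (1/2 : ℝ) • a + (1/2 : ℝ) • b = ((2 * c)⁻¹) • (x + x') := by
    rw [hadef, hbdef, smul_smul, smul_smul, smul_add]
    congr 1 <;> congr 1 <;> field_simp
  rw [heq, hf.smul_eq, abs_of_pos (by positivity)] at hlt
  have hub : 2 * c ≤ f (x + x') := by
    have h1 := hf.fderiv_le hx (x + x')
    have h2 : fderiv ℝ f x (x + x') = c + c := by rw [map_add, hf.euler hx, hφ]
    rw [h2] at h1; linarith
  have hge : (1:ℝ) ≤ (2 * c)⁻¹ * f (x + x') := by
    rw [le_inv_mul_iff₀ (by positivity), mul_one]; exact hub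
  linarith

end GoodNorm

lemma mem_cube0_iff (ψ : Module.Basis (Fin N) ℝ (Euc N)) (τ : ℝ) (u : Euc N) :
    u ∈ cube0 ψ τ ↔ ∀ i, -(τ/2) ≤ ψ.repr u i ∧ ψ.repr u i ≤ τ/2 := by
  simp only [cube0, cube, mem_setOf_eq, Pi.zero_apply, Int.cast_zero]
  constructor <;> intro h i <;> obtain ⟨h1, h2⟩ := h i <;> constructor <;> linarith

lemma cube0_convex (ψ : Module.Basis (Fin N) ℝ (Euc N)) (τ : ℝ) : Convex ℝ (cube0 ψ τ) := by
  intro u hu w hw a b ha hb hab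
  rw [mem_cube0_iff] at hu hw ⊢
  intro i
  have hrep : ψ.repr (a • u + b • w) i = a * ψ.repr u i + b * ψ.repr w i := by
    simp [map_add, _root_.map_smul]
  obtain ⟨h1, h2⟩ := hu i; obtain ⟨h3, h4⟩ := hw i
  rw [hrep]
  constructor <;> nlinarith

lemma pJ_repr (ψ : Module.Basis (Fin N) ℝ (Euc N)) (J : Set (Fin N)) (x : Euc N) (j : Fin N) :
    ψ.repr (pJ ψ J x) j = if j ∈ J then ψ.repr x j else 0 := by
  classical
  simp only [pJ, map_sum, apply_ite (ψ.repr), _root_.map_smul, map_zero]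
  rw [Finsupp.finset_sum_apply]
  rw [Finset.sum_eq_single j]
  · by_cases hjJ : j ∈ J <;> simp [hjJ, Module.Basis.repr_self, Finsupp.single_apply]
  · intro i _ hij
    by_cases hiJ : i ∈ J <;> simp [hiJ, Module.Basis.repr_self, Finsupp.single_apply, hij]
  · intro hj; exact absurd (Finset.mem_univ j) hj

lemma Dgrid_repr (ψ : Module.Basis (Fin N) ℝ (Euc N)) (τ : ℝ) {u : Euc N} {k : Fin N → ℤ}
    (hk : u = ∑ i, (τ * (k i : ℝ)) • ψ i) (i : Fin N) : ψ.repr u i = τ * (k i : ℝ) := by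
  rw [hk]
  have := ψ.repr_sum_self (fun i => τ * (k i : ℝ))
  exact congrFun this i


lemma repr_add_smul (ψ : Module.Basis (Fin N) ℝ (Euc N)) (v : Euc N) (s : ℝ) (i j : Fin N) :
    ψ.repr (v + s • ψ i) j = ψ.repr v j + s * (if i = j then 1 else 0) := by
  simp [map_add, _root_.map_smul, Module.Basis.repr_self, Finsupp.single_apply]

lemma grad_psi_zero {ψ : Module.Basis (Fin N) ℝ (Euc N)} {τ : ℝ} (hτ : 0 < τ)
    {f : Euc N → ℝ} (hf : GoodNorm f) {u v : Euc N}
    (hv : v ∈ cube0 ψ τ) (hmin : IsMinOn (fun w => f (w - u)) (cube0 ψ τ) v)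
    (hx : v - u ≠ 0) {i : Fin N} (hi : i ∉ Jset ψ τ v) : fderiv ℝ f (v - u) (ψ i) = 0 := by
  set r := ψ.repr v i with hr
  have hb := (mem_cube0_iff ψ τ v).mp hv i
  have hne : r ≠ τ/2 ∧ r ≠ -(τ/2) := by
    rw [Jset, mem_setOf_eq] at hi; push_neg at hi; exact hi
  have h1 : r < τ/2 := lt_of_le_of_ne hb.2 hne.1
  have h2 : -(τ/2) < r := lt_of_le_of_ne (by linarith [hb.1]) (Ne.symm hne.2)
  set ε := min (τ/2 - r) (r + τ/2) with hε
  have hεpos : 0 < ε := lt_min (by linarith) (by linarith)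
  have hmem : ∀ s : ℝ, |s| ≤ ε → v + s • ψ i ∈ cube0 ψ τ := by
    intro s hs
    rw [mem_cube0_iff]
    intro j
    rw [repr_add_smul]
    have habs := abs_le.mp hs
    by_cases hij : i = j
    · subst hij
      rw [if_pos rfl, mul_one]
      constructor
      · have := min_le_right (τ/2 - r) (r + τ/2); rw [← hε] at this; linarith
      · have := min_le_left (τ/2 - r) (r + τ/2); rw [← hε] at this; linarith
    · simp only [if_neg hij, mul_zero, add_zero]
      exact ⟨((mem_cube0_iff ψ τ v).mp hv j).1, ((mem_cube0_iff ψ τ v).mp hv j).2⟩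
  have hplus : 0 ≤ fderiv ℝ f (v - u) (ψ i) := by
    apply hf.dirnonneg hx (ψ i) hεpos
    intro t htm
    have hvm := hmem t (by rw [abs_of_pos htm.1]; exact htm.2)
    have := hmin hvm
    simpa [add_sub_right_comm] using this
  have hminus : 0 ≤ fderiv ℝ f (v - u) (-(ψ i)) := by
    apply hf.dirnonneg hx (-(ψ i)) hεpos
    intro t htm
    have hvm := hmem (-t) (by rw [abs_neg, abs_of_pos htm.1]; exact htm.2)
    have h5 : f (v - u) ≤ f (v + (-t) • ψ i - u) := hmin hvm
    have hrw : v + (-t) • ψ i - u = v - u + t • -ψ i := by module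
    rw [hrw] at h5
    exact h5
  rw [map_neg] at hminus
  linarith

lemma grad_dir_nonneg {ψ : Module.Basis (Fin N) ℝ (Euc N)} {τ : ℝ}
    {f : Euc N → ℝ} (hf : GoodNorm f) {u v : Euc N}
    (hv : v ∈ cube0 ψ τ) (hmin : IsMinOn (fun w => f (w - u)) (cube0 ψ τ) v)
    (hx : v - u ≠ 0) {w : Euc N} (hw : w ∈ cube0 ψ τ) :
    0 ≤ fderiv ℝ f (v - u) (w - v) := by
  apply hf.dirnonneg hx (w - v) one_pos
  intro t htm
  have hc : v + t • (w - v) = (1 - t) • v + t • w := by module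
  have hvm : v + t • (w - v) ∈ cube0 ψ τ := by
    rw [hc]
    exact cube0_convex ψ τ hv hw (by linarith [htm.2]) htm.1.le (by ring)
  have := hmin hvm
  simpa [add_sub_right_comm] using this

lemma key_inj {ψ : Module.Basis (Fin N) ℝ (Euc N)} {τ : ℝ} (hτ : 0 < τ)
    {f : Euc N → ℝ} (hf : GoodNorm f) {fd : Euc N → ℝ} (hfd : IsNormLike fd)
    {sol : Euc N → Euc N} (hsol : IsSol ψ τ f sol) {τ' : ℝ} {us : Euc N}
    {u u' : Euc N}
    (hu : u ∈ SSAT sol fd (ubar ψ τ us) (Set.Ioc 0 τ'))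
    (hu' : u' ∈ SSAT sol fd (ubar ψ τ us) (Set.Ioc 0 τ'))
    (hg : u ∈ Dgrid ψ τ) (hg' : u' ∈ Dgrid ψ τ)
    (hp : pJ ψ (Jset ψ τ us) u = pJ ψ (Jset ψ τ us) u') : u = u' := by
  obtain ⟨k, hk⟩ := hg
  obtain ⟨k', hk'⟩ := hg'
  set J := Jset ψ τ us with hJ
  set v := sol u with hv
  set v' := sol u' with hv'
  obtain ⟨hub, hfd1⟩ := hu
  obtain ⟨hub', hfd1'⟩ := hu'
  obtain ⟨hvc, hvJ⟩ := hub
  obtain ⟨hvc', hvJ'⟩ := hub'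
  have hmin := (hsol u).2
  have hmin' := (hsol u').2
  have hx : v - u ≠ 0 := by
    intro h
    have h2 : u - v = 0 := by
      have : u - v = -(v - u) := by abel
      rw [this, h, neg_zero]
    rw [h2, (hfd.eq_zero_iff 0).mpr rfl] at hfd1
    exact lt_irrefl 0 hfd1.1
  have hx' : v' - u' ≠ 0 := by
    intro h
    have h2 : u' - v' = 0 := by
      have : u' - v' = -(v' - u') := by abel
      rw [this, h, neg_zero]
    rw [h2, (hfd.eq_zero_iff 0).mpr rfl] at hfd1'
    exact lt_irrefl 0 hfd1'.1
  have hJeq : ∀ j ∈ J, ψ.repr u j = ψ.repr u' j := by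
    intro j hj
    have h1 : ψ.repr (pJ ψ J u) j = ψ.repr (pJ ψ J u') j := by rw [hp]
    rwa [pJ_repr, pJ_repr, if_pos hj, if_pos hj] at h1
  -- the gradient of f at x0 kills u' - u whenever it kills off-J basis vectors
  have phiDelta : ∀ x0 : Euc N, (∀ i ∉ J, fderiv ℝ f x0 (ψ i) = 0) →
      fderiv ℝ f x0 (u' - u) = 0 := by
    intro x0 hψ0
    have hrepr : u' - u = ∑ i, (ψ.repr (u' - u) i) • ψ i := (ψ.sum_repr _).symm
    rw [hrepr, map_sum]
    apply Finset.sum_eq_zero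
    intro i _
    by_cases hiJ : i ∈ J
    · have h0 : ψ.repr (u' - u) i = 0 := by
        rw [map_sub, Finsupp.sub_apply, hJeq i hiJ, sub_self]
      rw [h0, zero_smul, map_zero]
    · rw [_root_.map_smul, hψ0 i hiJ, smul_zero]
  have hψ0 : ∀ i ∉ J, fderiv ℝ f (v - u) (ψ i) = 0 := by
    intro i hi
    exact grad_psi_zero hτ hf hvc hmin hx (by rw [hvJ]; exact hi)
  have hψ0' : ∀ i ∉ J, fderiv ℝ f (v' - u') (ψ i) = 0 := by
    intro i hi
    exact grad_psi_zero hτ hf hvc' hmin' hx' (by rw [hvJ']; exact hi)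
  have hd1 : 0 ≤ fderiv ℝ f (v - u) (v' - v) := grad_dir_nonneg hf hvc hmin hx hvc'
  have hd1' : 0 ≤ fderiv ℝ f (v' - u') (v - v') := grad_dir_nonneg hf hvc' hmin' hx' hvc
  have hΔ : fderiv ℝ f (v - u) (u' - u) = 0 := phiDelta _ hψ0
  have hΔ' : fderiv ℝ f (v' - u') (u' - u) = 0 := phiDelta _ hψ0'
  have hsplit : (v' - u') - (v - u) = (v' - v) - (u' - u) := by abel
  have hφxx : 0 ≤ fderiv ℝ f (v - u) ((v' - u') - (v - u)) := by
    rw [hsplit, map_sub, hΔ, sub_zero]; exact hd1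
  have hsplit' : (v - u) - (v' - u') = (v - v') + (u' - u) := by abel
  have hφxx' : 0 ≤ fderiv ℝ f (v' - u') ((v - u) - (v' - u')) := by
    rw [hsplit', map_add, hΔ', add_zero]; exact hd1'
  have hsub := hf.subgrad hx (v' - u')
  have hsub' := hf.subgrad hx' (v - u)
  have hfeq : f (v' - u') = f (v - u) := le_antisymm (by linarith) (by linarith)
  have hφeq : fderiv ℝ f (v - u) ((v' - u') - (v - u)) = 0 :=
    le_antisymm (by linarith) hφxx
  have htouch : fderiv ℝ f (v - u) (v' - u') = f (v - u) := by
    have h1 : fderiv ℝ f (v - u) (v' - u')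
        = fderiv ℝ f (v - u) ((v' - u') - (v - u)) + fderiv ℝ f (v - u) (v - u) := by
      simp only [map_sub]; ring
    rw [h1, hφeq, hf.euler hx, zero_add]
  have hxx : v' - u' = v - u := hf.eq_of_touch hx hfeq htouch
  have hvv : u' - u = v' - v := by
    have h1 : u' - u = (v' - v) - ((v' - u') - (v - u)) := by abel
    rw [hxx, sub_self, sub_zero] at h1
    exact h1
  have hcoord : ∀ i, ψ.repr u i = ψ.repr u' i := by
    intro i
    by_cases hiJ : i ∈ J
    · exact hJeq i hiJ
    · have hro : ψ.repr (u' - u) i = ψ.repr (v' - v) i := by rw [hvv]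
      have hru : ψ.repr u i = τ * (k i : ℝ) := Dgrid_repr ψ τ hk i
      have hru' : ψ.repr u' i = τ * (k' i : ℝ) := Dgrid_repr ψ τ hk' i
      -- strict bounds on v, v' coordinates off J
      have hbv := (mem_cube0_iff ψ τ v).mp hvc i
      have hbv' := (mem_cube0_iff ψ τ v').mp hvc' i
      have hnev : ψ.repr v i ≠ τ/2 ∧ ψ.repr v i ≠ -(τ/2) := by
        have : i ∉ Jset ψ τ v := by rw [hvJ]; exact hiJ
        rw [Jset, mem_setOf_eq] at this; push_neg at this; exact this
      have hnev' : ψ.repr v' i ≠ τ/2 ∧ ψ.repr v' i ≠ -(τ/2) := by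
        have : i ∉ Jset ψ τ v' := by rw [hvJ']; exact hiJ
        rw [Jset, mem_setOf_eq] at this; push_neg at this; exact this
      have hv1 : ψ.repr v i < τ/2 := lt_of_le_of_ne hbv.2 hnev.1
      have hv2 : -(τ/2) < ψ.repr v i := lt_of_le_of_ne hbv.1 (Ne.symm hnev.2)
      have hv1' : ψ.repr v' i < τ/2 := lt_of_le_of_ne hbv'.2 hnev'.1
      have hv2' : -(τ/2) < ψ.repr v' i := lt_of_le_of_ne hbv'.1 (Ne.symm hnev'.2)
      have hdiff : ψ.repr (u' - u) i = τ * ((k' i : ℝ) - (k i : ℝ)) := by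
        rw [map_sub, Finsupp.sub_apply, hru, hru']; ring
      have hdiffv : ψ.repr (v' - v) i = ψ.repr v' i - ψ.repr v i := by
        rw [map_sub, Finsupp.sub_apply]
      have hband : τ * ((k' i : ℝ) - (k i : ℝ)) < τ ∧ -τ < τ * ((k' i : ℝ) - (k i : ℝ)) := by
        rw [← hdiff, hro, hdiffv]
        constructor <;> linarith
      have hd1r : ((k' i : ℝ) - (k i : ℝ)) < 1 :=
        (mul_lt_mul_iff_right₀ hτ).mp (by linarith [hband.1])
      have hd2r : (-1 : ℝ) < ((k' i : ℝ) - (k i : ℝ)) :=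
        (mul_lt_mul_iff_right₀ hτ).mp (by linarith [hband.2])
      have hkz : k' i = k i := by
        have h1 : (k' i - k i : ℤ) < 1 := by
          have : ((k' i - k i : ℤ) : ℝ) < 1 := by push_cast; linarith
          exact_mod_cast this
        have h2 : (-1 : ℤ) < (k' i - k i : ℤ) := by
          have : (-1 : ℝ) < ((k' i - k i : ℤ) : ℝ) := by push_cast; linarith
          exact_mod_cast this
        omega
      rw [hru, hru', hkz]
  calc u = ∑ i, ψ.repr u i • ψ i := (ψ.sum_repr u).symm
    _ = ∑ i, ψ.repr u' i • ψ i := Finset.sum_congr rfl fun i _ => by rw [hcoord i]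
    _ = u' := ψ.sum_repr u'


/-- the number of grid points in `SSAT(ū*, (0,τ'])` is at most the number
of points of the grid `τℤ^{J(u*)}` lying in `p(SSAT(ū*, (0,τ']))`. -/
theorem stmt9 {N : ℕ} (hN : 1 ≤ N) (ψ : Module.Basis (Fin N) ℝ (Euc N)) (τ : ℝ) (hτ : 0 < τ)
    (f : Euc N → ℝ) (hf : GoodNorm f) (fd : Euc N → ℝ) (hfd : IsNormLike fd)
    (sol : Euc N → Euc N) (hsol : IsSol ψ τ f sol)
    (τ' : ℝ) (hτ' : 0 < τ')
    (us : Euc N) (hus : us ∈ frontier (cube0 ψ τ)) :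
    Cardinal.mk ↥(SSAT sol fd (ubar ψ τ us) (Set.Ioc 0 τ') ∩ Dgrid ψ τ) ≤
      Cardinal.mk ↥((pJ ψ (Jset ψ τ us) '' SSAT sol fd (ubar ψ τ us) (Set.Ioc 0 τ')) ∩
        JgridJ ψ τ (Jset ψ τ us)) := by
  set J := Jset ψ τ us with hJ
  set S := SSAT sol fd (ubar ψ τ us) (Set.Ioc 0 τ') with hS
  have hmem : ∀ x : ↥(S ∩ Dgrid ψ τ), pJ ψ J x.1 ∈ (pJ ψ J '' S) ∩ JgridJ ψ τ J := by
    rintro ⟨x, hxS, hxD⟩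
    refine ⟨⟨x, hxS, rfl⟩, ?_⟩
    obtain ⟨k, hk⟩ := hxD
    refine ⟨k, ?_⟩
    simp only [pJ]
    apply Finset.sum_congr rfl
    intro j _
    by_cases hj : j ∈ J
    · rw [if_pos hj, if_pos hj, Dgrid_repr ψ τ hk j]
    · rw [if_neg hj, if_neg hj]
  exact Cardinal.mk_le_of_injective (f := fun x => ⟨pJ ψ J x.1, hmem x⟩)
    (fun a b h => Subtype.ext
      (key_inj hτ hf hfd hsol a.2.1 b.2.1 a.2.2 b.2.2 (congrArg Subtype.val h)))
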